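/- arXiv:0705.1040 — 2 statements merged into one kernel-verified Lean document; each statement's English description precedes it below -/
import Mathlib

section
/- Let (Λ_Q, f) be a C^{1+Lip} expansive and transitive Markov system. Then the set H has Lebesgue measure zero. -/
open Set Metric Filter MeasureTheory
open scoped Classical

/-- The word `[ω 0, ω 1, …, ω (n-1)]` read off from the sequence `ω`. -/
def wordOf {p : ℕ} (ω : ℕ → Fin p) (n : ℕ) : List (Fin p) :=
  (List.range n).map ω

/-- The cylinder sets `Δ_{i₁…iₙ} = g_{i₁…i_{n-1}}(I_{iₙ})` of the iterated function
system given by the big interval `I`, the subintervals `Isub i` and the maps `g i`;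
by convention `Δ_∅ = I`. -/
def cylOf {p : ℕ} (I : Set ℝ) (Isub : Fin p → Set ℝ) (g : Fin p → ℝ → ℝ) :
    List (Fin p) → Set ℝ
  | [] => I
  | [i] => Isub i
  | i :: j :: w => g i '' cylOf I Isub g (j :: w)

/-- The sequence `ω` contains the word `w` as a sub-word starting at position `n`. -/
def containsAt {p : ℕ} (ω : ℕ → Fin p) (w : List (Fin p)) (n : ℕ) : Prop :=
  ∀ k : ℕ, (hk : k < w.length) → ω (n + k) = w.get ⟨k, hk⟩

/-- The sequence `ω` belongs to `Σ_Q`, i.e. it contains no word of `Q` as a sub-word. -/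
def avoids {p : ℕ} (Q : Finset (List (Fin p))) (ω : ℕ → Fin p) : Prop :=
  ∀ w ∈ Q, ∀ n : ℕ, ¬ containsAt ω w n

/-- The limit set `Λ_Q = π(Σ_Q)`: points lying, for some `ω ∈ Σ_Q`, in all the
cylinders `Δ_{ω₀…ω_{n-1}}`. -/
def limitSetOf {p : ℕ} (I : Set ℝ) (Isub : Fin p → Set ℝ) (g : Fin p → ℝ → ℝ)
    (Q : Finset (List (Fin p))) : Set ℝ :=
  { x | ∃ ω : ℕ → Fin p, avoids Q ω ∧ ∀ n : ℕ, x ∈ cylOf I Isub g (wordOf ω n) }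

/-- `gIter g ω n = g_{i_n … i_1} = g_{ω (n-1)} ∘ ⋯ ∘ g_{ω 0}`. -/
def gIter {p : ℕ} (g : Fin p → ℝ → ℝ) (ω : ℕ → Fin p) : ℕ → ℝ → ℝ
  | 0 => id
  | n + 1 => g (ω n) ∘ gIter g ω n

/-- The derivative of the composition `gIter g ω n` at `x` (chain rule product). -/
noncomputable def gIterDer {p : ℕ} (g gder : Fin p → ℝ → ℝ) (ω : ℕ → Fin p)
    (n : ℕ) (x : ℝ) : ℝ :=
  ∏ k ∈ Finset.range n, gder (ω k) (gIter g ω k x)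

/-- Prepending the finite word `w` to the infinite sequence `ω`. -/
def prependWord {p : ℕ} (w : List (Fin p)) (ω : ℕ → Fin p) : ℕ → Fin p :=
  fun n => if h : n < w.length then w.get ⟨n, h⟩ else ω (n - w.length)

/-- `l(Σ_Q)`: the minimum, over all finite sets `Q'` of words with `Σ_{Q'} = Σ_Q`,
of the maximal length `l(Q')` of words of `Q'`. -/
noncomputable def minRepLen {p : ℕ} (Q : Finset (List (Fin p))) : ℕ :=
  sInf { n : ℕ | ∃ Q' : Finset (List (Fin p)),
    (∀ ω : ℕ → Fin p, avoids Q' ω ↔ avoids Q ω) ∧ Q'.sup List.length = n }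

/-- A `C^{1+Lip}` expansive and transitive Markov system `(Λ_Q, f)`. -/
structure ExpansiveMarkovSystem (p : ℕ) where
  /-- the alphabet is nonempty -/
  hp : 0 < p
  /-- the ambient closed interval `I` -/
  I : Set ℝ
  hI : ∃ a b : ℝ, a < b ∧ I = Set.Icc a b
  /-- the pairwise disjoint closed subintervals `I₁, …, I_p` -/
  Isub : Fin p → Set ℝ
  hIsub : ∀ i, ∃ a b : ℝ, a < b ∧ Isub i = Set.Icc a b
  hsubI : ∀ i, Isub i ⊆ I
  hdisj : ∀ i j, i ≠ j → Disjoint (Isub i) (Isub j)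
  /-- the contractions `g i`, defined on `⋃ j, Isub j` -/
  g : Fin p → ℝ → ℝ
  /-- the derivative of `g i` on `⋃ j, Isub j` -/
  gder : Fin p → ℝ → ℝ
  hg_inj : ∀ i, Set.InjOn (g i) (⋃ j, Isub j)
  hg_range : ∀ i, g i '' (⋃ j, Isub j) ⊆ interior (Isub i)
  hg_deriv : ∀ i, ∀ x ∈ ⋃ j, Isub j,
    HasDerivWithinAt (g i) (gder i x) (⋃ j, Isub j) x
  hgder_ne : ∀ i, ∀ x ∈ ⋃ j, Isub j, gder i x ≠ 0
  hgder_cont : ∀ i, ContinuousOn (gder i) (⋃ j, Isub j)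
  /-- `log |g i'|` is Lipschitz on the domain -/
  hgder_lip : ∀ i, ∃ θ : ℝ, ∀ x ∈ ⋃ j, Isub j, ∀ y ∈ ⋃ j, Isub j,
    abs (Real.log (abs (gder i x)) - Real.log (abs (gder i y))) ≤ θ * |x - y|
  /-- the expanding map `f`, with `f (g i x) = x` -/
  f : ℝ → ℝ
  /-- the derivative `f'` of `f` on the ranges of the `g i` -/
  fder : ℝ → ℝ
  hf : ∀ i, ∀ x ∈ ⋃ j, Isub j, f (g i x) = x
  hfder : ∀ i, ∀ x ∈ ⋃ j, Isub j, fder (g i x) = (gder i x)⁻¹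
  /-- the generator (expansivity) condition: `d_n → 0` -/
  hgen : ∀ ε : ℝ, 0 < ε → ∃ N : ℕ, ∀ w : List (Fin p), N ≤ w.length →
    Metric.diam (cylOf I Isub g w) < ε
  /-- the finite set of forbidden words -/
  Q : Finset (List (Fin p))
  /-- `Σ_Q` is completely invariant: `σ(Σ_Q) = Σ_Q` -/
  hQinv : ∀ ω : ℕ → Fin p, avoids Q ω →
    ∃ ω' : ℕ → Fin p, avoids Q ω' ∧ ∀ n : ℕ, ω' (n + 1) = ω n
  /-- `f|Λ_Q` is topologically transitive -/
  htrans : ∀ U V : Set ℝ, IsOpen U → IsOpen V →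
    (U ∩ limitSetOf I Isub g Q).Nonempty → (V ∩ limitSetOf I Isub g Q).Nonempty →
    ∃ n : ℕ, ∃ x ∈ U ∩ limitSetOf I Isub g Q, f^[n] x ∈ V

namespace ExpansiveMarkovSystem

variable {p : ℕ} (S : ExpansiveMarkovSystem p)

/-- The common domain `⋃ j, I_j` of the maps `g i`. -/
def dom : Set ℝ := ⋃ j, S.Isub j

/-- The cylinder `Δ_w` associated to the word `w`. -/
def cyl (w : List (Fin p)) : Set ℝ := cylOf S.I S.Isub S.g w

/-- The limit set `Λ_Q`. -/
def limitSet : Set ℝ := limitSetOf S.I S.Isub S.g S.Q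

/-- The domain of `f`, i.e. the union of the ranges of the `g i`. -/
def domF : Set ℝ := ⋃ i, S.g i '' S.dom

/-- The derivative `(fⁿ)'(x)` of the `n`-th iterate of `f` at `x`. -/
noncomputable def derIter (n : ℕ) (x : ℝ) : ℝ :=
  ∏ k ∈ Finset.range n, S.fder (S.f^[k] x)

/-- The Lyapunov exponent `χ(x) = limsup (1/n) log |(fⁿ)'(x)|`. -/
noncomputable def lyap (x : ℝ) : ℝ :=
  Filter.limsup (fun n : ℕ => Real.log |S.derIter n x| / n) Filter.atTop

/-- The set `H` of points of `Λ_Q` with infinitely many hyperbolic instants. -/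
def hypSet : Set ℝ :=
  { x ∈ S.limitSet | ∃ c₁ : ℝ, 0 < c₁ ∧ ∃ c₂ : ℝ, 0 < c₂ ∧
      ∃ n : ℕ → ℕ, StrictMono n ∧
        ∃ r : ℕ → ℝ, (∀ k, 0 < r k) ∧ Antitone r ∧
          Filter.Tendsto r Filter.atTop (nhds 0) ∧
          ∀ k : ℕ,
            (∀ y ∈ Metric.ball x (r k), ∀ j < n k, S.f^[j] y ∈ S.domF) ∧
            c₁ < Metric.diam (S.f^[n k] '' Metric.ball x (r k)) ∧
            (∀ y ∈ Metric.ball x (r k), ∀ z ∈ Metric.ball x (r k),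
              |S.derIter (n k) y| / |S.derIter (n k) z| < c₂) }

/-- `x` is a parabolic periodic point: `f^m(x) = x` and `|(f^m)'(x)| = 1`. -/
def IsParabolicPeriodic (x : ℝ) : Prop :=
  x ∈ S.limitSet ∧ ∃ m : ℕ, 1 ≤ m ∧ S.f^[m] x = x ∧ |S.derIter m x| = 1

/-- `ν` is a `t`-conformal (Borel probability) measure supported on `Λ_Q`. -/
def IsConformal (ν : Measure ℝ) (t : ℝ) : Prop :=
  IsProbabilityMeasure ν ∧ ν S.limitSetᶜ = 0 ∧
    ∀ A : Set ℝ, MeasurableSet A → A ⊆ S.limitSet → Set.InjOn S.f A →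
      ν (S.f '' A) = ∫⁻ x in A, ENNReal.ofReal (|S.fder x| ^ t) ∂ν

/-- `t_c = inf {t ≥ 0 : a t-conformal measure on Λ_Q exists}`. -/
noncomputable def tc : ℝ :=
  sInf { t : ℝ | 0 ≤ t ∧ ∃ ν : Measure ℝ, S.IsConformal ν t }

/-- `n` is a hyperbolic time for `x` with exponent `α`. -/
def IsHypTime (α : ℝ) (x : ℝ) (n : ℕ) : Prop :=
  ∀ k : ℕ, 1 ≤ k → k ≤ n → Real.exp (k * α) ≤ |S.derIter k (S.f^[n - k] x)|

/-- `H_HT(α)`: the points of `Λ_Q` with infinitely many hyperbolic times with exponent `α`. -/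
def HHT (α : ℝ) : Set ℝ :=
  { x ∈ S.limitSet | ∀ N : ℕ, ∃ n : ℕ, N ≤ n ∧ S.IsHypTime α x n }

end ExpansiveMarkovSystem

section Basics

namespace ExpansiveMarkovSystem

variable {p : ℕ} (S : ExpansiveMarkovSystem p)

lemma Isub_sub_dom (i : Fin p) : S.Isub i ⊆ S.dom := Set.subset_iUnion _ i

lemma dom_sub_I : S.dom ⊆ S.I := Set.iUnion_subset fun i => S.hsubI i

lemma Isub_compact (i : Fin p) : IsCompact (S.Isub i) := by
  obtain ⟨a, b, _, h⟩ := S.hIsub i; rw [h]; exact isCompact_Icc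

lemma Isub_nonempty (i : Fin p) : (S.Isub i).Nonempty := by
  obtain ⟨a, b, hab, h⟩ := S.hIsub i; rw [h]; exact Set.nonempty_Icc.2 hab.le

lemma I_compact : IsCompact S.I := by
  obtain ⟨a, b, _, h⟩ := S.hI; rw [h]; exact isCompact_Icc

lemma I_bounded : Bornology.IsBounded S.I := S.I_compact.isBounded

lemma dom_compact : IsCompact S.dom := isCompact_iUnion fun i => S.Isub_compact i

lemma diam_I_pos : 0 < Metric.diam S.I := by
  obtain ⟨a, b, hab, h⟩ := S.hI
  rw [h, Real.diam_Icc hab.le]; linarith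

lemma int_Isub_sub_int_dom (i : Fin p) : interior (S.Isub i) ⊆ interior S.dom :=
  interior_mono (S.Isub_sub_dom i)

lemma g_cont (i : Fin p) : ContinuousOn (S.g i) S.dom :=
  fun x hx => (S.hg_deriv i x hx).continuousWithinAt

lemma g_im_sub_int (i : Fin p) : S.g i '' S.dom ⊆ interior (S.Isub i) := S.hg_range i

lemma g_im_sub_dom (i : Fin p) : S.g i '' S.dom ⊆ S.dom :=
  (S.g_im_sub_int i).trans (interior_subset.trans (S.Isub_sub_dom i))

lemma g_im_compact (i : Fin p) : IsCompact (S.g i '' S.dom) :=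
  S.dom_compact.image_of_continuousOn (S.g_cont i)

lemma f_g {i : Fin p} {z : ℝ} (hz : z ∈ S.dom) : S.f (S.g i z) = z := S.hf i z hz

lemma f_mem_dom {i : Fin p} {y : ℝ} (hy : y ∈ S.g i '' S.dom) :
    S.g i (S.f y) = y ∧ S.f y ∈ S.dom := by
  obtain ⟨z, hz, rfl⟩ := hy
  rw [S.f_g hz]; exact ⟨rfl, hz⟩

lemma f_cont_piece (i : Fin p) : ContinuousOn S.f (S.g i '' S.dom) := by
  have hcs : CompactSpace S.dom := isCompact_iff_compactSpace.mp S.dom_compact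
  have hbij : Set.BijOn (S.g i) S.dom (S.g i '' S.dom) := (S.hg_inj i).bijOn_image
  let e : S.dom ≃ ↥(S.g i '' S.dom) := hbij.equiv _
  have hce : Continuous e := by
    apply Continuous.subtype_mk
    exact (S.g_cont i).restrict
  let h : S.dom ≃ₜ ↥(S.g i '' S.dom) := Continuous.homeoOfEquivCompactToT2 hce
  rw [continuousOn_iff_continuous_restrict]
  have : Set.domRestrict (S.g i '' S.dom) S.f = Subtype.val ∘ h.symm := by
    funext y
    have h1 : S.g i ((h.symm y : ℝ)) = (y : ℝ) := by
      have := h.apply_symm_apply y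
      exact congrArg Subtype.val this
    have h2 : (h.symm y : ℝ) ∈ S.dom := (h.symm y).2
    simp only [Set.domRestrict_apply, Function.comp_apply]
    rw [← h1, S.f_g h2]
  rw [this]
  exact continuous_subtype_val.comp h.symm.continuous

end ExpansiveMarkovSystem

end Basics
namespace ExpansiveMarkovSystem

variable {p : ℕ} (S : ExpansiveMarkovSystem p)

lemma cyl_nil : S.cyl [] = S.I := rfl

lemma cyl_single (i : Fin p) : S.cyl [i] = S.Isub i := rfl

lemma cyl_cons (i : Fin p) {w : List (Fin p)} (hw : w ≠ []) :
    S.cyl (i :: w) = S.g i '' S.cyl w := by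
  cases w with
  | nil => exact absurd rfl hw
  | cons j t => rfl

lemma cyl_cons_sub_dom : ∀ (w : List (Fin p)) (i : Fin p), S.cyl (i :: w) ⊆ S.dom := by
  intro w
  induction w with
  | nil => intro i; exact S.Isub_sub_dom i
  | cons j t ih =>
      intro i
      rw [S.cyl_cons i (List.cons_ne_nil j t)]
      exact (Set.image_mono (ih j)).trans (S.g_im_sub_dom i)

lemma cyl_sub_dom {w : List (Fin p)} (hw : w ≠ []) : S.cyl w ⊆ S.dom := by
  cases w with
  | nil => exact absurd rfl hw
  | cons i t => exact S.cyl_cons_sub_dom t i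

lemma cyl_cons_sub_Isub (i : Fin p) (w : List (Fin p)) : S.cyl (i :: w) ⊆ S.Isub i := by
  cases w with
  | nil => exact subset_rfl
  | cons j t =>
      rw [S.cyl_cons i (List.cons_ne_nil j t)]
      exact ((Set.image_mono (S.cyl_cons_sub_dom t j)).trans (S.g_im_sub_int i)).trans
        interior_subset

lemma cyl_sub_I (w : List (Fin p)) : S.cyl w ⊆ S.I := by
  cases w with
  | nil => exact subset_rfl
  | cons i t => exact (S.cyl_cons_sub_Isub i t).trans (S.hsubI i)

lemma cyl_compact (w : List (Fin p)) : IsCompact (S.cyl w) := by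
  induction w with
  | nil => exact S.I_compact
  | cons i t ih =>
      cases t with
      | nil => exact S.Isub_compact i
      | cons j u =>
          rw [S.cyl_cons i (List.cons_ne_nil j u)]
          exact ih.image_of_continuousOn ((S.g_cont i).mono (S.cyl_cons_sub_dom u j))

lemma cyl_nonempty (w : List (Fin p)) : (S.cyl w).Nonempty := by
  induction w with
  | nil =>
      obtain ⟨a, b, hab, h⟩ := S.hI
      rw [cyl_nil, h]; exact Set.nonempty_Icc.2 hab.le
  | cons i t ih =>
      cases t with
      | nil => exact S.Isub_nonempty i
      | cons j u =>
          rw [S.cyl_cons i (List.cons_ne_nil j u)]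
          exact ih.image _

lemma cyl_preconnected (w : List (Fin p)) : IsPreconnected (S.cyl w) := by
  induction w with
  | nil =>
      obtain ⟨a, b, _, h⟩ := S.hI
      rw [cyl_nil, h]; exact isPreconnected_Icc
  | cons i t ih =>
      cases t with
      | nil =>
          obtain ⟨a, b, _, h⟩ := S.hIsub i
          rw [cyl_single, h]; exact isPreconnected_Icc
      | cons j u =>
          rw [S.cyl_cons i (List.cons_ne_nil j u)]
          exact ih.image _ ((S.g_cont i).mono (S.cyl_cons_sub_dom u j))

lemma cyl_disjoint : ∀ (w v : List (Fin p)), w ≠ [] → w.length = v.length → w ≠ v →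
    Disjoint (S.cyl w) (S.cyl v) := by
  intro w
  induction w with
  | nil => intro v h; exact absurd rfl h
  | cons a w' ih =>
      intro v _ hlen hne
      cases v with
      | nil => simp at hlen
      | cons b v' =>
          by_cases hab : a = b
          · subst hab
            have hne' : w' ≠ v' := by
              intro h; exact hne (by rw [h])
            have hlen' : w'.length = v'.length := by simpa using hlen
            cases w' with
            | nil =>
                cases v' with
                | nil => exact absurd rfl hne'
                | cons c u => simp at hlen'
            | cons c u =>
                cases v' with
                | nil => simp at hlen'
                | cons d t =>
                    rw [S.cyl_cons a (List.cons_ne_nil c u), S.cyl_cons a (List.cons_ne_nil d t)]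
                    rw [Set.disjoint_iff_inter_eq_empty,
                      ← (S.hg_inj a).image_inter (S.cyl_cons_sub_dom u c) (S.cyl_cons_sub_dom t d)]
                    have hd := ih (d :: t) (List.cons_ne_nil c u) hlen' hne'
                    rw [Set.disjoint_iff_inter_eq_empty] at hd
                    rw [hd]
                    exact Set.image_empty _
          · exact Set.disjoint_of_subset (S.cyl_cons_sub_Isub a w') (S.cyl_cons_sub_Isub b v')
              (S.hdisj a b hab)

lemma cyl_append (i : Fin p) : ∀ (w : List (Fin p)), w ≠ [] → S.cyl (w ++ [i]) ⊆ S.cyl w := by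
  intro w
  induction w with
  | nil => intro h; exact absurd rfl h
  | cons a w' ih =>
      intro _
      cases w' with
      | nil =>
          show S.cyl ([a] ++ [i]) ⊆ S.cyl [a]
          rw [show ([a] ++ [i] : List (Fin p)) = a :: [i] from rfl,
            S.cyl_cons a (List.cons_ne_nil i [])]
          rw [cyl_single, cyl_single]
          exact ((Set.image_mono (S.Isub_sub_dom i)).trans (S.g_im_sub_int a)).trans
            interior_subset
      | cons b t =>
          have h1 : (a :: b :: t) ++ [i] = a :: ((b :: t) ++ [i]) := rfl
          rw [h1, S.cyl_cons a (by simp), S.cyl_cons a (List.cons_ne_nil b t)]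
          exact Set.image_mono (ih (List.cons_ne_nil b t))

end ExpansiveMarkovSystem
section WordOf

lemma wordOf_length {p : ℕ} (ω : ℕ → Fin p) (n : ℕ) : (wordOf ω n).length = n := by
  simp [wordOf]

lemma wordOf_zero {p : ℕ} (ω : ℕ → Fin p) : wordOf ω 0 = [] := rfl

lemma wordOf_succ {p : ℕ} (ω : ℕ → Fin p) (n : ℕ) :
    wordOf ω (n + 1) = wordOf ω n ++ [ω n] := by
  simp [wordOf, List.range_succ]

lemma wordOf_succ' {p : ℕ} (ω : ℕ → Fin p) (n : ℕ) :
    wordOf ω (n + 1) = ω 0 :: wordOf (fun k => ω (k + 1)) n := by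
  simp [wordOf, List.range_succ_eq_map, List.map_map]

lemma wordOf_ne_nil {p : ℕ} (ω : ℕ → Fin p) {n : ℕ} (hn : n ≠ 0) : wordOf ω n ≠ [] := by
  intro h
  have := wordOf_length ω n
  rw [h] at this
  simp at this
  exact hn this.symm

end WordOf

namespace ExpansiveMarkovSystem

variable {p : ℕ} (S : ExpansiveMarkovSystem p)

lemma mem_limitSet_cyl {x : ℝ} (hx : x ∈ S.limitSet) :
    ∃ ω : ℕ → Fin p, avoids S.Q ω ∧ ∀ n : ℕ, x ∈ S.cyl (wordOf ω n) := hx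

lemma limitSet_invariant {x : ℝ} (hx : x ∈ S.limitSet) : S.f x ∈ S.limitSet := by
  obtain ⟨ω, hω, hmem⟩ := hx
  refine ⟨fun k => ω (k + 1), ?_, ?_⟩
  · intro w hw n hc
    refine hω w hw (n + 1) ?_
    intro k hk
    have := hc k hk
    rw [← this]
    congr 1
    omega
  · -- first: for every m ≥ 1, f x ∈ cyl (wordOf ω' m)
    have key : ∀ m : ℕ, 1 ≤ m → S.f x ∈ S.cyl (wordOf (fun k => ω (k + 1)) m) := by
      intro m hm
      have hne : wordOf (fun k => ω (k + 1)) m ≠ [] := wordOf_ne_nil _ (by omega)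
      have hx1 : x ∈ S.cyl (ω 0 :: wordOf (fun k => ω (k + 1)) m) := by
        have h0 := hmem (m + 1)
        rw [show wordOf ω (m+1) = ω 0 :: wordOf (fun k => ω (k + 1)) m from wordOf_succ' ω m] at h0
        exact h0
      rw [S.cyl_cons (ω 0) hne] at hx1
      obtain ⟨z, hz, rfl⟩ := hx1
      rw [S.f_g (S.cyl_sub_dom hne hz)]
      exact hz
    intro n
    cases n with
    | zero =>
        have h1 := key 1 le_rfl
        exact S.cyl_sub_I _ h1
    | succ m => exact key (m + 1) (by omega)

lemma limitSet_iterate {x : ℝ} (hx : x ∈ S.limitSet) (n : ℕ) : S.f^[n] x ∈ S.limitSet := by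
  induction n with
  | zero => exact hx
  | succ m ih =>
      rw [Function.iterate_succ_apply']
      exact S.limitSet_invariant ih

lemma limitSet_step {x : ℝ} (hx : x ∈ S.limitSet) {w : List (Fin p)} (hw : w ≠ [])
    (hxw : x ∈ S.cyl w) : ∃ i : Fin p, x ∈ S.cyl (w ++ [i]) := by
  obtain ⟨ω, _, hmem⟩ := hx
  have hN := hmem w.length
  have heq : wordOf ω w.length = w := by
    by_contra hne
    have hd := S.cyl_disjoint (wordOf ω w.length) w (wordOf_ne_nil ω (by
      intro h; exact hw (List.length_eq_zero_iff.mp (h ▸ rfl)))) (by rw [wordOf_length]) hne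
    exact (Set.disjoint_iff_inter_eq_empty.mp hd ▸ (Set.mem_inter hN hxw) : x ∈ (∅ : Set ℝ))
  refine ⟨ω w.length, ?_⟩
  have := hmem (w.length + 1)
  rw [wordOf_succ, heq] at this
  exact this

end ExpansiveMarkovSystem

section ConnectedPieces

/-- A preconnected set contained in a finite union of pairwise disjoint compact sets
lies in the piece it meets. -/
lemma preconnected_subset_piece {ι : Type*} [Finite ι] (C : ι → Set ℝ)
    (hC : ∀ i, IsCompact (C i)) (hd : Pairwise (Function.onFun Disjoint C))
    {s : Set ℝ} (hs : IsPreconnected s) (hsub : s ⊆ ⋃ i, C i) {i₀ : ι}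
    (hne : (s ∩ C i₀).Nonempty) : s ⊆ C i₀ := by
  have hDc : IsCompact (⋃ i : {i : ι // i ≠ i₀}, C i) :=
    isCompact_iUnion fun i => hC i
  have hdisj : Disjoint (C i₀) (⋃ i : {i : ι // i ≠ i₀}, C i) := by
    rw [Set.disjoint_iUnion_right]
    exact fun i => (hd (Ne.symm i.2))
  obtain ⟨u, v, hu, hv, hCu, hDv, huv⟩ :=
    SeparatedNhds.of_isCompact_isCompact (hC i₀) hDc hdisj
  have hsuv : s ⊆ u ∪ v := by
    intro y hy
    obtain ⟨t, ⟨i, rfl⟩, hyt⟩ := hsub hy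
    by_cases hii : i = i₀
    · subst hii; exact Or.inl (hCu hyt)
    · exact Or.inr (hDv (Set.mem_iUnion.mpr ⟨⟨i, hii⟩, hyt⟩))
  have hsu : (s ∩ u).Nonempty := by
    obtain ⟨y, hys, hyC⟩ := hne
    exact ⟨y, hys, hCu hyC⟩
  have hmain := hs.subset_left_of_subset_union hu hv huv hsuv hsu
  intro y hy
  obtain ⟨t, ⟨i, rfl⟩, hyt⟩ := hsub hy
  by_cases hii : i = i₀
  · subst hii; exact hyt
  · exact absurd (Set.mem_inter (hmain hy) (hDv (Set.mem_iUnion.mpr ⟨⟨i, hii⟩, hyt⟩)))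
      (by rw [Set.disjoint_iff_inter_eq_empty] at huv; rw [huv]; exact Set.notMem_empty y)

end ConnectedPieces
namespace ExpansiveMarkovSystem

variable {p : ℕ}

/-- `gc [i₁, …, iₙ] = g i₁ ∘ ⋯ ∘ g iₙ`. -/
def gc (S : ExpansiveMarkovSystem p) : List (Fin p) → ℝ → ℝ
  | [] => id
  | a :: w => S.g a ∘ S.gc w

/-- The chain-rule derivative of `gc w` at `c`. -/
noncomputable def gcDer (S : ExpansiveMarkovSystem p) : List (Fin p) → ℝ → ℝ
  | [], _ => 1
  | a :: w, c => S.gder a (S.gc w c) * S.gcDer w c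

variable (S : ExpansiveMarkovSystem p)

lemma gc_nil (c : ℝ) : S.gc [] c = c := rfl

lemma gc_cons (a : Fin p) (w : List (Fin p)) (c : ℝ) :
    S.gc (a :: w) c = S.g a (S.gc w c) := rfl

lemma gc_deriv : ∀ (w : List (Fin p)) {c : ℝ}, c ∈ interior S.dom →
    HasDerivAt (S.gc w) (S.gcDer w c) c ∧ S.gc w c ∈ interior S.dom := by
  intro w
  induction w with
  | nil => intro c hc; exact ⟨hasDerivAt_id c, hc⟩
  | cons a w ih =>
      intro c hc
      obtain ⟨hder, hmem⟩ := ih hc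
      have hz : S.gc w c ∈ S.dom := interior_subset hmem
      have hnhds : S.dom ∈ nhds (S.gc w c) :=
        mem_nhds_iff.mpr ⟨interior S.dom, interior_subset, isOpen_interior, hmem⟩
      have hga : HasDerivAt (S.g a) (S.gder a (S.gc w c)) (S.gc w c) :=
        (S.hg_deriv a _ hz).hasDerivAt hnhds
      constructor
      · exact HasDerivAt.comp c hga hder
      · exact S.int_Isub_sub_int_dom a (S.g_im_sub_int a ⟨_, hz, rfl⟩)

lemma gc_maps_dom : ∀ (w : List (Fin p)) {c : ℝ}, c ∈ S.dom → S.gc w c ∈ S.dom := by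
  intro w
  induction w with
  | nil => intro c hc; exact hc
  | cons a w ih => intro c hc; exact S.g_im_sub_dom a ⟨_, ih hc, rfl⟩

/-- Key algebraic identity: `gc w` inverts `f^[w.length]` on points whose orbit lies in the
pieces given by `w`, and the chain-rule derivative is inverse to `derIter`. -/
lemma gc_inverse : ∀ (w : List (Fin p)) (y : ℝ),
    (∀ j, (h : j < w.length) → S.f^[j] y ∈ S.g (w.get ⟨j, h⟩) '' S.dom) →
    S.gc w (S.f^[w.length] y) = y ∧
      S.gcDer w (S.f^[w.length] y) * S.derIter w.length y = 1 := by
  intro w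
  induction w with
  | nil =>
      intro y _
      refine ⟨rfl, ?_⟩
      simp [gcDer, derIter]
  | cons a w ih =>
      intro y hO
      have h0 : y ∈ S.g a '' S.dom := by
        have := hO 0 (by simp)
        simpa using this
      obtain ⟨z, hz, hyz⟩ := h0
      have hfy : S.f y = z := by rw [← hyz, S.f_g hz]
      have hO' : ∀ j, (h : j < w.length) → S.f^[j] (S.f y) ∈ S.g (w.get ⟨j, h⟩) '' S.dom := by
        intro j hj
        have := hO (j + 1) (by simpa using Nat.succ_lt_succ hj)
        rw [← Function.iterate_succ_apply]
        simpa using this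
      obtain ⟨hinv, hprod⟩ := ih (S.f y) hO'
      have hlen : (a :: w).length = w.length + 1 := rfl
      have hit : S.f^[(a :: w).length] y = S.f^[w.length] (S.f y) := by
        rw [hlen, Function.iterate_succ_apply]
      constructor
      · rw [hit, gc_cons, hinv, hfy, hyz]
      · -- derivative product
        have hderIter : S.derIter (w.length + 1) y = S.derIter w.length (S.f y) * S.fder y := by
          unfold derIter
          rw [Finset.prod_range_succ']
          congr 1
        have hfder : S.fder y = (S.gder a z)⁻¹ := by rw [← hyz]; exact S.hfder a z hz
        have hgcd : S.gcDer (a :: w) (S.f^[(a :: w).length] y)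
            = S.gder a (S.f y) * S.gcDer w (S.f^[w.length] (S.f y)) := by
          show S.gder a (S.gc w (S.f^[(a :: w).length] y)) * S.gcDer w (S.f^[(a :: w).length] y)
            = _
          rw [hit, hinv]
        rw [hit] at hgcd ⊢
        rw [hgcd, hlen, hderIter, hfder, hfy]
        have hne : S.gder a z ≠ 0 := S.hgder_ne a z hz
        rw [hfy] at hprod
        field_simp
        linear_combination hprod

/-- Mean value theorem for `gc w` on intervals inside `interior dom`. -/
lemma gc_mvt (w : List (Fin p)) {u v : ℝ} (huv : u < v) (h : Icc u v ⊆ interior S.dom) :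
    ∃ c ∈ Ioo u v, S.gc w v - S.gc w u = S.gcDer w c * (v - u) := by
  have hcont : ContinuousOn (S.gc w) (Icc u v) := fun t ht =>
    ((S.gc_deriv w (h ht)).1).continuousAt.continuousWithinAt
  have hder : ∀ t ∈ Ioo u v, HasDerivAt (S.gc w) (S.gcDer w t) t := fun t ht =>
    (S.gc_deriv w (h (Ioo_subset_Icc_self ht))).1
  obtain ⟨c, hc, heq⟩ := exists_hasDerivAt_eq_slope (S.gc w) (S.gcDer w) huv hcont hder
  refine ⟨c, hc, ?_⟩
  rw [heq, div_mul_cancel₀]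
  exact sub_ne_zero_of_ne (ne_of_gt huv)

end ExpansiveMarkovSystem
namespace ExpansiveMarkovSystem

variable {p : ℕ} (S : ExpansiveMarkovSystem p)

lemma pieces_disjoint : Pairwise (Function.onFun Disjoint (fun i => S.g i '' S.dom)) := by
  intro i j hij
  exact Set.disjoint_of_subset ((S.g_im_sub_int i).trans interior_subset)
    ((S.g_im_sub_int j).trans interior_subset) (S.hdisj i j hij)

lemma ball_pieces {x r : ℝ} (hr : 0 < r) {n : ℕ}
    (hdomF : ∀ y ∈ Metric.ball x r, ∀ j < n, S.f^[j] y ∈ S.domF) :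
    ∃ w : List (Fin p), w.length = n ∧
      (∀ y ∈ Metric.ball x r, ∀ j, (h : j < w.length) →
        S.f^[j] y ∈ S.g (w.get ⟨j, h⟩) '' S.dom) ∧
      ContinuousOn (S.f^[n]) (Metric.ball x r) := by
  set B := Metric.ball x r with hB
  have hxB : x ∈ B := Metric.mem_ball_self hr
  have hBpre : IsPreconnected B := (convex_ball x r).isPreconnected
  have pieces : ∀ j, j < n → ContinuousOn (S.f^[j]) B →
      ∃ i : Fin p, S.f^[j] '' B ⊆ S.g i '' S.dom := by
    intro j hj hcont
    have him : S.f^[j] '' B ⊆ ⋃ i, S.g i '' S.dom := by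
      rintro _ ⟨z, hz, rfl⟩
      exact hdomF z hz j hj
    obtain ⟨i₀, hi₀⟩ := Set.mem_iUnion.mp (hdomF x hxB j hj)
    exact ⟨i₀, preconnected_subset_piece _ (fun i => S.g_im_compact i) S.pieces_disjoint
      (hBpre.image _ hcont) him ⟨S.f^[j] x, ⟨x, hxB, rfl⟩, hi₀⟩⟩
  have main : ∀ j, j ≤ n → ContinuousOn (S.f^[j]) B := by
    intro j
    induction j with
    | zero => intro _; simpa using continuousOn_id
    | succ j ihj =>
        intro hj
        have hc := ihj (by omega)
        obtain ⟨i, hi⟩ := pieces j (by omega) hc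
        rw [Function.iterate_succ']
        exact (S.f_cont_piece i).comp hc (fun y hy => hi ⟨y, hy, rfl⟩)
  let ifun : ℕ → Fin p := fun j =>
    if h : j < n then Classical.choose (pieces j h (main j h.le)) else ⟨0, S.hp⟩
  refine ⟨(List.range n).map ifun, by simp, ?_, main n le_rfl⟩
  have hwget : ∀ j (h : j < ((List.range n).map ifun).length),
      ((List.range n).map ifun).get ⟨j, h⟩ = ifun j := by
    intro j h
    simp [List.get_eq_getElem]
  intro y hy j h
  rw [hwget j h]
  have hjn : j < n := by simpa using h
  have : ifun j = Classical.choose (pieces j hjn (main j hjn.le)) := dif_pos hjn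
  rw [this]
  exact Classical.choose_spec (pieces j hjn (main j hjn.le)) ⟨y, hy, rfl⟩

end ExpansiveMarkovSystem
namespace ExpansiveMarkovSystem

variable {p : ℕ} (S : ExpansiveMarkovSystem p)

lemma gap_core {w : List (Fin p)} (hw : w ≠ []) {a b : Fin p} (hab : a ≠ b)
    {u₀ v₀ : ℝ} (hu₀ : u₀ ∈ S.cyl (w ++ [a])) (hv₀ : v₀ ∈ S.cyl (w ++ [b]))
    (huv : u₀ < v₀) :
    ∃ q δ : ℝ, 0 < δ ∧ Set.Ioo (q - δ) (q + δ) ⊆ S.cyl w ∧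
      ∀ i : Fin p, Disjoint (Set.Ioo (q - δ) (q + δ)) (S.cyl (w ++ [i])) := by
  have happ : ∀ (i j : Fin p), w ++ [i] = w ++ [j] → i = j := by
    intro i j h; simpa using h
  have happne : ∀ i : Fin p, w ++ [i] ≠ [] := by intro i; simp
  have hCd : Pairwise (Function.onFun Disjoint (fun i : Fin p => S.cyl (w ++ [i]))) := by
    intro i j hij
    exact S.cyl_disjoint _ _ (happne i) (by simp) (fun h => hij (happ i j h))
  have hu₀w : u₀ ∈ S.cyl w := S.cyl_append a w hw hu₀
  have hv₀w : v₀ ∈ S.cyl w := S.cyl_append b w hw hv₀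
  have hIcc : Icc u₀ v₀ ⊆ S.cyl w := (S.cyl_preconnected w).ordConnected.out hu₀w hv₀w
  -- find a point of the open interval not in the union of the next-level cylinders
  have hq : ∃ q ∈ Ioo u₀ v₀, q ∉ ⋃ i : Fin p, S.cyl (w ++ [i]) := by
    by_contra hcon
    push_neg at hcon
    have hIccU : Icc u₀ v₀ ⊆ ⋃ i : Fin p, S.cyl (w ++ [i]) := by
      intro t ht
      rcases eq_or_lt_of_le ht.1 with h1 | h1
      · exact Set.mem_iUnion.mpr ⟨a, h1 ▸ hu₀⟩
      rcases eq_or_lt_of_le ht.2 with h2 | h2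
      · exact Set.mem_iUnion.mpr ⟨b, h2 ▸ hv₀⟩
      exact hcon t ⟨h1, h2⟩
    have hsubA : Icc u₀ v₀ ⊆ S.cyl (w ++ [a]) :=
      preconnected_subset_piece _ (fun i => S.cyl_compact _) hCd isPreconnected_Icc hIccU
        ⟨u₀, Set.left_mem_Icc.mpr huv.le, hu₀⟩
    have : v₀ ∈ S.cyl (w ++ [a]) ∩ S.cyl (w ++ [b]) :=
      ⟨hsubA (Set.right_mem_Icc.mpr huv.le), hv₀⟩
    rw [Set.disjoint_iff_inter_eq_empty.mp (hCd hab)] at this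
    exact this
  obtain ⟨q, hqIoo, hqU⟩ := hq
  have hUclosed : IsClosed (⋃ i : Fin p, S.cyl (w ++ [i])) :=
    isClosed_iUnion_of_finite fun i => (S.cyl_compact _).isClosed
  have hopen : IsOpen (Ioo u₀ v₀ ∩ (⋃ i : Fin p, S.cyl (w ++ [i]))ᶜ) :=
    isOpen_Ioo.inter hUclosed.isOpen_compl
  obtain ⟨δ, hδ, hball⟩ := Metric.isOpen_iff.mp hopen q ⟨hqIoo, hqU⟩
  rw [Real.ball_eq_Ioo] at hball
  refine ⟨q, δ, hδ, ?_, ?_⟩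
  · exact fun t ht => hIcc (Ioo_subset_Icc_self (hball ht).1)
  · intro i
    rw [Set.disjoint_left]
    intro t ht hti
    exact (hball ht).2 (Set.mem_iUnion.mpr ⟨i, hti⟩)

lemma cyl_gap (hp2 : 2 ≤ p) (w : List (Fin p)) (hw : w ≠ []) :
    ∃ q δ : ℝ, 0 < δ ∧ Set.Ioo (q - δ) (q + δ) ⊆ S.cyl w ∧
      Set.Ioo (q - δ) (q + δ) ∩ S.limitSet = ∅ := by
  have h01 : (⟨0, by omega⟩ : Fin p) ≠ ⟨1, by omega⟩ := by
    intro h; simpa [Fin.ext_iff] using h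
  set i0 : Fin p := ⟨0, by omega⟩
  set i1 : Fin p := ⟨1, by omega⟩
  set A := S.cyl (w ++ [i0]) with hA
  set B := S.cyl (w ++ [i1]) with hB
  have hAco : IsCompact A := S.cyl_compact _
  have hBco : IsCompact B := S.cyl_compact _
  have hAne : A.Nonempty := S.cyl_nonempty _
  have hBne : B.Nonempty := S.cyl_nonempty _
  have hApre : IsPreconnected A := S.cyl_preconnected _
  have hBpre : IsPreconnected B := S.cyl_preconnected _
  have hdisj : Disjoint A B :=
    S.cyl_disjoint _ _ (by simp) (by simp) (fun h => h01 (by simpa using h))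
  have horder : sSup A < sInf B ∨ sSup B < sInf A := by
    by_contra hcon
    push_neg at hcon
    obtain ⟨h1, h2⟩ := hcon
    set t := max (sInf A) (sInf B)
    have htA : t ∈ A := (hApre.ordConnected).out (hAco.sInf_mem hAne) (hAco.sSup_mem hAne)
      ⟨le_max_left _ _, max_le (csInf_le_csSup hAne hAco.bddBelow hAco.bddAbove) h1⟩
    have htB : t ∈ B := (hBpre.ordConnected).out (hBco.sInf_mem hBne) (hBco.sSup_mem hBne)
      ⟨le_max_right _ _, max_le h2 (csInf_le_csSup hBne hBco.bddBelow hBco.bddAbove)⟩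
    rw [Set.disjoint_iff_inter_eq_empty] at hdisj
    have : t ∈ A ∩ B := ⟨htA, htB⟩
    rw [hdisj] at this
    exact this
  have hgap : ∃ q δ : ℝ, 0 < δ ∧ Set.Ioo (q - δ) (q + δ) ⊆ S.cyl w ∧
      ∀ i : Fin p, Disjoint (Set.Ioo (q - δ) (q + δ)) (S.cyl (w ++ [i])) := by
    rcases horder with h | h
    · exact S.gap_core hw h01 (hAco.sSup_mem hAne) (hBco.sInf_mem hBne) h
    · exact S.gap_core hw (Ne.symm h01) (hBco.sSup_mem hBne) (hAco.sInf_mem hAne) h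
  obtain ⟨q, δ, hδ, hsub, hdis⟩ := hgap
  refine ⟨q, δ, hδ, hsub, ?_⟩
  rw [Set.eq_empty_iff_forall_notMem]
  rintro y ⟨hy1, hy2⟩
  obtain ⟨i, hi⟩ := S.limitSet_step hy2 hw (hsub hy1)
  exact Set.disjoint_left.mp (hdis i) hy1 hi

lemma uniform_gap (hp2 : 2 ≤ p) {c₁ : ℝ} (hc₁ : 0 < c₁) :
    ∃ ε : ℝ, 0 < ε ∧ ∀ T : Set ℝ, T ⊆ S.I → IsPreconnected T → c₁ < Metric.diam T →
      ∃ a b : ℝ, a < b ∧ ε ≤ b - a ∧ Set.Ioo a b ⊆ T ∧ Set.Ioo a b ∩ S.limitSet = ∅ := by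
  obtain ⟨N₀, hN₀⟩ := S.hgen (c₁ / 8) (by linarith)
  set N := max N₀ 1 with hN
  haveI : Nonempty (Fin p) := ⟨⟨0, S.hp⟩⟩
  have hv : ∀ v : Fin N → Fin p, ∃ q δ : ℝ, 0 < δ ∧
      Set.Ioo (q - δ) (q + δ) ⊆ S.cyl (List.ofFn v) ∧
      Set.Ioo (q - δ) (q + δ) ∩ S.limitSet = ∅ := by
    intro v
    apply S.cyl_gap hp2
    intro h
    have := List.length_ofFn (f := v)
    rw [h] at this
    simp at this
    omega
  choose qf δf hδf hsubf hdisf using hv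
  have hne : (Finset.univ : Finset (Fin N → Fin p)).Nonempty := Finset.univ_nonempty
  set ε₂ := Finset.inf' Finset.univ hne δf with hε₂
  have hε₂pos : 0 < ε₂ := (Finset.lt_inf'_iff hne).mpr fun v _ => hδf v
  refine ⟨min (c₁ / 4) ε₂, lt_min (by linarith) hε₂pos, ?_⟩
  intro T hTI hTpre hTdiam
  have hTord : T.OrdConnected := hTpre.ordConnected
  have hpts : ∃ x₀ ∈ T, ∃ y₀ ∈ T, c₁ < dist x₀ y₀ := by
    by_contra hcon
    push_neg at hcon
    exact absurd (Metric.diam_le_of_forall_dist_le hc₁.le hcon) (not_le.mpr hTdiam)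
  obtain ⟨x₀, hx₀, y₀, hy₀, hxy⟩ := hpts
  set a₀ := min x₀ y₀
  set b₀ := max x₀ y₀
  have ha₀ : a₀ ∈ T := by rcases min_choice x₀ y₀ with h | h <;> rw [show a₀ = _ from h] <;>
    assumption
  have hb₀ : b₀ ∈ T := by rcases max_choice x₀ y₀ with h | h <;> rw [show b₀ = _ from h] <;>
    assumption
  have hab : c₁ < b₀ - a₀ := by
    rw [Real.dist_eq] at hxy
    rcases abs_cases (x₀ - y₀) with ⟨h, _⟩ | ⟨h, _⟩ <;> rw [h] at hxy <;>
      simp only [a₀, b₀] <;>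
      rcases le_total x₀ y₀ with h' | h' <;>
      simp [min_eq_left, min_eq_right, max_eq_left, max_eq_right, h'] <;> linarith
  have hIccT : Icc a₀ b₀ ⊆ T := hTord.out ha₀ hb₀
  set m := (a₀ + b₀) / 2 with hm
  by_cases hcase : Set.Ioo (m - c₁ / 8) (m + c₁ / 8) ∩ S.limitSet = ∅
  · refine ⟨m - c₁ / 8, m + c₁ / 8, by linarith, ?_, ?_, hcase⟩
    · have := min_le_left (c₁ / 4) ε₂
      linarith
    · intro t ht
      apply hIccT
      constructor
      · have := ht.1; simp only [hm] at this ⊢; linarith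
      · have := ht.2; simp only [hm] at this ⊢; linarith
  · obtain ⟨lam, hlamIoo, hlamΛ⟩ := Set.nonempty_iff_ne_empty.mpr hcase
    obtain ⟨ω, _, hmem⟩ := hlamΛ
    set v : Fin N → Fin p := fun j => ω j with hvdef
    have hweq : wordOf ω N = List.ofFn v := by
      apply List.ext_get
      · rw [wordOf_length, List.length_ofFn]
      · intro j h1 h2
        rw [List.get_ofFn]
        simp [wordOf, hvdef]
    have hlamw : lam ∈ S.cyl (List.ofFn v) := by rw [← hweq]; exact hmem N
    have hdiamw : Metric.diam (S.cyl (List.ofFn v)) < c₁ / 8 := by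
      apply hN₀
      rw [List.length_ofFn]
      exact le_max_left _ _
    have hsubT : S.cyl (List.ofFn v) ⊆ T := by
      intro z hz
      have hdz : dist z lam ≤ Metric.diam (S.cyl (List.ofFn v)) :=
        Metric.dist_le_diam_of_mem (S.I_bounded.subset (S.cyl_sub_I _)) hz hlamw
      have h1 : |z - lam| < c₁ / 8 := by rw [← Real.dist_eq]; linarith
      have h2 : |lam - m| < c₁ / 8 := by
        rw [abs_lt]; exact ⟨by linarith [hlamIoo.1], by linarith [hlamIoo.2]⟩
      rw [abs_lt] at h1 h2
      apply hIccT
      constructor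
      · simp only [hm] at h2 ⊢; linarith
      · simp only [hm] at h2 ⊢; linarith
    refine ⟨qf v - δf v, qf v + δf v, by linarith [hδf v], ?_, (hsubf v).trans hsubT, hdisf v⟩
    have h1 : ε₂ ≤ δf v := Finset.inf'_le _ (Finset.mem_univ v)
    have := min_le_right (c₁ / 4) ε₂
    have := hδf v
    linarith

end ExpansiveMarkovSystem
namespace ExpansiveMarkovSystem

variable {p : ℕ} (S : ExpansiveMarkovSystem p)

set_option maxHeartbeats 1000000 in
lemma key_estimate (hp2 : 2 ≤ p) {x : ℝ} (hx : x ∈ S.hypSet) :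
    ∃ C : ENNReal, C < 1 ∧ ∃ r' : ℕ → ℝ, (∀ k, 0 < r' k) ∧
      Filter.Tendsto r' Filter.atTop (nhds 0) ∧
      ∀ k, volume (closure S.limitSet ∩ Metric.closedBall x (r' k)) /
        volume (Metric.closedBall x (r' k)) ≤ C := by
  obtain ⟨hxΛ, c₁, hc₁, c₂, hc₂, n, hmono, r, hrpos, hrant, hrtend, hprops⟩ := hx
  obtain ⟨ε, hε, hgap⟩ := S.uniform_gap hp2 hc₁
  set L := Metric.diam S.I with hL
  have hLpos : 0 < L := S.diam_I_pos
  set δ := ε / (2 * c₂ * L) with hδdef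
  have hδpos : 0 < δ := div_pos hε (mul_pos (mul_pos two_pos hc₂) hLpos)
  refine ⟨ENNReal.ofReal ((2 - δ) / 2), ENNReal.ofReal_lt_one.mpr (by linarith), ?_⟩
  refine ⟨fun k => r (k + 1), fun k => hrpos (k + 1), ?_, ?_⟩
  · exact hrtend.comp (Filter.tendsto_add_atTop_nat 1)
  intro k
  set m := n (k + 1) with hm
  set ρ := r (k + 1) with hρdef
  have hρ : 0 < ρ := hrpos (k + 1)
  obtain ⟨hdomF, hdiam, hdist⟩ := hprops (k + 1)
  have hm1 : 1 ≤ m := le_trans (by omega) (hmono.le_apply (x := k + 1))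
  obtain ⟨w, hwlen, hO, hcont⟩ := S.ball_pieces hρ hdomF
  set B := Metric.ball x ρ with hB
  set T := S.f^[m] '' B with hT
  have hTdom : T ⊆ S.dom := by
    rintro t ⟨y, hy, rfl⟩
    obtain ⟨m', hm'⟩ : ∃ m', m = m' + 1 := ⟨m - 1, by omega⟩
    rw [hm', Function.iterate_succ_apply']
    have h' : S.f^[m'] y ∈ ⋃ i, S.g i '' S.dom := hdomF y hy m' (by omega)
    obtain ⟨i, hi⟩ := Set.mem_iUnion.mp h'
    exact (S.f_mem_dom hi).2
  have hTpre : IsPreconnected T := (convex_ball x ρ).isPreconnected.image _ hcont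
  have hxT : S.f^[m] x ∈ T := ⟨x, Metric.mem_ball_self hρ, rfl⟩
  have hinv : ∀ y ∈ B, S.gc w (S.f^[m] y) = y ∧
      S.gcDer w (S.f^[m] y) * S.derIter m y = 1 := by
    intro y hy
    have := S.gc_inverse w y (hO y hy)
    rwa [hwlen] at this
  obtain ⟨j₀, hj₀⟩ := Set.mem_iUnion.mp (hTdom hxT)
  have hTsub : T ⊆ S.Isub j₀ :=
    preconnected_subset_piece _ (fun i => S.Isub_compact i) (fun i j hij => S.hdisj i j hij)
      hTpre hTdom ⟨S.f^[m] x, hxT, hj₀⟩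
  obtain ⟨α, β, hαβ, hIj⟩ := S.hIsub j₀
  have hIooint : Ioo α β ⊆ interior S.dom := by
    rw [← interior_Icc, ← hIj]
    exact S.int_Isub_sub_int_dom j₀
  have hψT : ∀ t ∈ T, ∃ y ∈ B, S.f^[m] y = t ∧ S.gc w t = y := by
    rintro t ⟨y, hy, rfl⟩
    exact ⟨y, hy, rfl, (hinv y hy).1⟩
  set SS := S.gc w '' (T ∩ Ioo α β) with hSS
  have hBsub : B \ {S.gc w α, S.gc w β} ⊆ SS := by
    rintro y ⟨hyB, hyne⟩
    have htT : S.f^[m] y ∈ T := ⟨y, hyB, rfl⟩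
    have htIcc : S.f^[m] y ∈ Icc α β := by rw [← hIj]; exact hTsub htT
    have hψt : S.gc w (S.f^[m] y) = y := (hinv y hyB).1
    rcases eq_or_lt_of_le htIcc.1 with h1 | h1
    · exact absurd (by rw [← hψt, ← h1]; exact Set.mem_insert _ _) hyne
    rcases eq_or_lt_of_le htIcc.2 with h2 | h2
    · exact absurd (by rw [← hψt, h2]; simp) hyne
    exact ⟨S.f^[m] y, ⟨htT, h1, h2⟩, hψt⟩
  have hSSvol : ENNReal.ofReal (2 * ρ) ≤ volume SS := by
    calc ENNReal.ofReal (2 * ρ) = volume B := (Real.volume_ball x ρ).symm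
      _ = volume (B \ {S.gc w α, S.gc w β}) :=
          (measure_diff_null (Set.Finite.measure_zero ((Set.finite_singleton _).insert _) _)).symm
      _ ≤ volume SS := measure_mono hBsub
  have hSSne : SS.Nonempty := by
    rcases Set.eq_empty_or_nonempty SS with h | h
    · rw [h, measure_empty] at hSSvol
      have hpos : (0 : ENNReal) < ENNReal.ofReal (2 * ρ) :=
        ENNReal.ofReal_pos.mpr (by linarith)
      exact absurd hSSvol (not_le.mpr hpos)
    · exact h
  have hSSsub : SS ⊆ S.dom := by
    rintro _ ⟨t, ht, rfl⟩
    exact S.gc_maps_dom w (hTdom ht.1)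
  have hSSbdd : Bornology.IsBounded SS := S.dom_compact.isBounded.subset hSSsub
  set M := sSup SS with hM
  set mi := sInf SS with hmi
  have hIccMI : SS ⊆ Icc mi M := fun y hy =>
    ⟨csInf_le hSSbdd.bddBelow hy, le_csSup hSSbdd.bddAbove hy⟩
  have hmiM : mi ≤ M := csInf_le_csSup hSSne hSSbdd.bddBelow hSSbdd.bddAbove
  have hMmi : 2 * ρ ≤ M - mi := by
    have h1 : volume SS ≤ ENNReal.ofReal (M - mi) := by
      calc volume SS ≤ volume (Icc mi M) := measure_mono hIccMI
        _ = ENNReal.ofReal (M - mi) := Real.volume_Icc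
    exact (ENNReal.ofReal_le_ofReal_iff (by linarith)).mp (hSSvol.trans h1)
  obtain ⟨u', hu'SS, hu'gt⟩ := exists_lt_of_lt_csSup hSSne (by linarith : M - ρ / 2 < M)
  obtain ⟨v', hv'SS, hv'lt⟩ := exists_lt_of_csInf_lt hSSne (by linarith : mi < mi + ρ / 2)
  have hu'le : u' ≤ M := le_csSup hSSbdd.bddAbove hu'SS
  have hv'ge : mi ≤ v' := csInf_le hSSbdd.bddBelow hv'SS
  have huv' : ρ ≤ u' - v' := by linarith
  obtain ⟨t₁, ht₁mem, ht₁⟩ := hu'SS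
  obtain ⟨t₂, ht₂mem, ht₂⟩ := hv'SS
  have ht₁₂ : t₁ ≠ t₂ := by
    intro h
    rw [h, ht₂] at ht₁
    linarith
  set u := min t₁ t₂ with hu
  set v := max t₁ t₂ with hv
  have huvlt : u < v := min_lt_max.mpr ht₁₂
  have hTord : (T ∩ Ioo α β).OrdConnected := hTpre.ordConnected.inter Set.ordConnected_Ioo
  have humem : u ∈ T ∩ Ioo α β := by
    rcases le_total t₁ t₂ with h | h
    · rwa [hu, min_eq_left h]
    · rwa [hu, min_eq_right h]
  have hvmem : v ∈ T ∩ Ioo α β := by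
    rcases le_total t₁ t₂ with h | h
    · rwa [hv, max_eq_right h]
    · rwa [hv, max_eq_left h]
  have hIccuv : Icc u v ⊆ T ∩ Ioo α β := hTord.out humem hvmem
  have hIccint : Icc u v ⊆ interior S.dom := fun t ht => hIooint (hIccuv ht).2
  obtain ⟨c, hcIoo, hceq⟩ := S.gc_mvt w huvlt hIccint
  have habs : |S.gc w v - S.gc w u| = u' - v' := by
    rcases le_total t₁ t₂ with h | h
    · rw [hv, hu, max_eq_right h, min_eq_left h, ht₁, ht₂, abs_sub_comm,
        abs_of_nonneg (by linarith)]
    · rw [hv, hu, max_eq_left h, min_eq_right h, ht₂, ht₁, abs_of_nonneg (by linarith)]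
  have hcT : c ∈ T := (hIccuv (Ioo_subset_Icc_self hcIoo)).1
  obtain ⟨y₀, hy₀B, hy₀eq, hy₀ψ⟩ := hψT c hcT
  have hder0 : S.gcDer w c * S.derIter m y₀ = 1 := by
    have := (hinv y₀ hy₀B).2
    rwa [hy₀eq] at this
  have hgc_ne : S.gcDer w c ≠ 0 := left_ne_zero_of_mul_eq_one hder0
  have hder0_ne : S.derIter m y₀ ≠ 0 := right_ne_zero_of_mul_eq_one hder0
  have hvu_le : v - u ≤ L := by
    have h1 : u ∈ S.I := S.dom_sub_I (hTdom humem.1)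
    have h2 : v ∈ S.I := S.dom_sub_I (hTdom hvmem.1)
    have := Metric.dist_le_diam_of_mem S.I_bounded h2 h1
    rw [Real.dist_eq, abs_of_nonneg (by linarith)] at this
    exact this
  have hslope : ρ ≤ |S.gcDer w c| * L := by
    have h1 : |S.gc w v - S.gc w u| = |S.gcDer w c| * (v - u) := by
      rw [hceq, abs_mul, abs_of_nonneg (by linarith : (0:ℝ) ≤ v - u)]
    have h2 : |S.gcDer w c| * (v - u) ≤ |S.gcDer w c| * L :=
      mul_le_mul_of_nonneg_left hvu_le (abs_nonneg _)
    have h3 : ρ ≤ |S.gc w v - S.gc w u| := by rw [habs]; exact huv'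
    linarith
  have habs0 : |S.gcDer w c| * |S.derIter m y₀| = 1 := by
    rw [← abs_mul, hder0, abs_one]
  have hy₀bound : |S.derIter m y₀| * ρ ≤ L := by
    have hgpos : 0 < |S.gcDer w c| := abs_pos.mpr hgc_ne
    have hd0 : |S.derIter m y₀| = 1 / |S.gcDer w c| := by
      rw [eq_div_iff (ne_of_gt hgpos), mul_comm]
      exact habs0
    rw [hd0, one_div, inv_mul_eq_div, div_le_iff₀ hgpos]
    calc ρ ≤ |S.gcDer w c| * L := hslope
      _ = L * |S.gcDer w c| := mul_comm _ _
  -- apply the uniform gap to T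
  have hTI : T ⊆ S.I := hTdom.trans S.dom_sub_I
  obtain ⟨a, b, hab, hεab, hIooT, hIooΛ⟩ := hgap T hTI hTpre hdiam
  set a'' := a + (b - a) / 4 with ha''
  set b'' := b - (b - a) / 4 with hb''
  have ha''b'' : a'' < b'' := by simp only [ha'', hb'']; linarith
  have hIccab : Icc a'' b'' ⊆ Ioo a b := by
    intro t ht
    obtain ⟨h1, h2⟩ := ht
    constructor
    · simp only [ha''] at h1; linarith
    · simp only [hb''] at h2; linarith
  have hIooint2 : Ioo a b ⊆ interior S.dom :=
    interior_maximal (hIooT.trans hTdom) isOpen_Ioo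
  obtain ⟨c', hc'Ioo, hc'eq⟩ := S.gc_mvt w ha''b'' (fun t ht => hIooint2 (hIccab ht))
  have hc'T : c' ∈ T := hIooT (hIccab (Ioo_subset_Icc_self hc'Ioo))
  obtain ⟨y', hy'B, hy'eq, hy'ψ⟩ := hψT c' hc'T
  have hder1 : S.gcDer w c' * S.derIter m y' = 1 := by
    have := (hinv y' hy'B).2
    rwa [hy'eq] at this
  have habs1 : |S.gcDer w c'| * |S.derIter m y'| = 1 := by
    rw [← abs_mul, hder1, abs_one]
  have hdist' : |S.derIter m y'| < c₂ * |S.derIter m y₀| := by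
    have h1 := hdist y' hy'B y₀ hy₀B
    rw [div_lt_iff₀ (abs_pos.mpr hder0_ne)] at h1
    exact h1
  have hder'bound : |S.derIter m y'| * ρ ≤ c₂ * L := by
    calc |S.derIter m y'| * ρ ≤ (c₂ * |S.derIter m y₀|) * ρ :=
          mul_le_mul_of_nonneg_right hdist'.le hρ.le
      _ = c₂ * (|S.derIter m y₀| * ρ) := by ring
      _ ≤ c₂ * L := mul_le_mul_of_nonneg_left hy₀bound hc₂.le
  have h2 : ρ ≤ |S.gcDer w c'| * (c₂ * L) := by
    calc ρ = (|S.gcDer w c'| * |S.derIter m y'|) * ρ := by rw [habs1, one_mul]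
      _ = |S.gcDer w c'| * (|S.derIter m y'| * ρ) := by ring
      _ ≤ |S.gcDer w c'| * (c₂ * L) :=
          mul_le_mul_of_nonneg_left hder'bound (abs_nonneg _)
  have hεb : ε / 2 ≤ b'' - a'' := by simp only [ha'', hb'']; linarith
  have hεb2 : ε ≤ (b'' - a'') * 2 := by simp only [ha'', hb'']; linarith
  have hψgap : δ * ρ ≤ |S.gc w b'' - S.gc w a''| := by
    have h1 : |S.gc w b'' - S.gc w a''| = |S.gcDer w c'| * (b'' - a'') := by
      rw [hc'eq, abs_mul, abs_of_nonneg (by linarith : (0:ℝ) ≤ b'' - a'')]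
    rw [h1, hδdef, div_mul_eq_mul_div,
      div_le_iff₀ (mul_pos (mul_pos two_pos hc₂) hLpos)]
    calc ε * ρ ≤ ε * (|S.gcDer w c'| * (c₂ * L)) := mul_le_mul_of_nonneg_left h2 hε.le
      _ ≤ ((b'' - a'') * 2) * (|S.gcDer w c'| * (c₂ * L)) :=
          mul_le_mul_of_nonneg_right hεb2
            (mul_nonneg (abs_nonneg _) (mul_nonneg hc₂.le hLpos.le))
      _ = |S.gcDer w c'| * (b'' - a'') * (2 * c₂ * L) := by ring
  set J := Ioo (min (S.gc w a'') (S.gc w b'')) (max (S.gc w a'') (S.gc w b'')) with hJ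
  have hcontψ : ContinuousOn (S.gc w) (Icc a'' b'') := fun t ht =>
    ((S.gc_deriv w (hIooint2 (hIccab ht))).1).continuousAt.continuousWithinAt
  have hJsub : J ⊆ S.gc w '' (Ioo a'' b'') := by
    rcases le_total (S.gc w a'') (S.gc w b'') with h | h
    · rw [hJ, min_eq_left h, max_eq_right h]
      exact intermediate_value_Ioo ha''b''.le hcontψ
    · rw [hJ, min_eq_right h, max_eq_left h]
      exact intermediate_value_Ioo' ha''b''.le hcontψ
  have hJB : S.gc w '' (Ioo a'' b'') ⊆ B \ S.limitSet := by
    rintro _ ⟨t, ht, rfl⟩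
    have htIoo : t ∈ Ioo a b := hIccab (Ioo_subset_Icc_self ht)
    have htT : t ∈ T := hIooT htIoo
    obtain ⟨y, hyB, hyeq, hyψ⟩ := hψT t htT
    rw [hyψ]
    refine ⟨hyB, fun hyΛ => ?_⟩
    have hmem : S.f^[m] y ∈ S.limitSet := S.limitSet_iterate hyΛ m
    rw [hyeq] at hmem
    exact Set.eq_empty_iff_forall_notMem.mp hIooΛ t ⟨htIoo, hmem⟩
  have hJclΛ : J ∩ closure S.limitSet = ∅ := by
    have h1 : J ∩ S.limitSet = ∅ := by
      rw [Set.eq_empty_iff_forall_notMem]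
      rintro z ⟨hz1, hz2⟩
      exact ((hJsub.trans hJB) hz1).2 hz2
    have h2 := IsOpen.inter_closure (isOpen_Ioo (a := min (S.gc w a'') (S.gc w b''))
      (b := max (S.gc w a'') (S.gc w b''))) (t := S.limitSet)
    rw [h1] at h2
    rw [Set.eq_empty_iff_forall_notMem]
    intro z hz
    simpa using h2 hz
  have hJvol : ENNReal.ofReal (δ * ρ) ≤ volume J := by
    rw [hJ, Real.volume_Ioo, max_sub_min_eq_abs]
    exact ENNReal.ofReal_le_ofReal hψgap
  have hJcB : J ⊆ Metric.closedBall x ρ :=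
    (hJsub.trans hJB).trans (Set.diff_subset.trans Metric.ball_subset_closedBall)
  have hJne_top : volume J ≠ ⊤ := by
    rw [hJ, Real.volume_Ioo]
    exact ENNReal.ofReal_ne_top
  have hfinal : volume (closure S.limitSet ∩ Metric.closedBall x ρ) ≤
      ENNReal.ofReal (2 * ρ - δ * ρ) := by
    have hsub2 : closure S.limitSet ∩ Metric.closedBall x ρ ⊆ Metric.closedBall x ρ \ J := by
      rintro z ⟨hz1, hz2⟩
      exact ⟨hz2, fun hzJ => Set.eq_empty_iff_forall_notMem.mp hJclΛ z ⟨hzJ, hz1⟩⟩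
    calc volume (closure S.limitSet ∩ Metric.closedBall x ρ)
        ≤ volume (Metric.closedBall x ρ \ J) := measure_mono hsub2
      _ = volume (Metric.closedBall x ρ) - volume J :=
          measure_diff hJcB measurableSet_Ioo.nullMeasurableSet hJne_top
      _ ≤ ENNReal.ofReal (2 * ρ) - ENNReal.ofReal (δ * ρ) := by
          rw [Real.volume_closedBall]
          exact tsub_le_tsub_left hJvol _
      _ = ENNReal.ofReal (2 * ρ - δ * ρ) := (ENNReal.ofReal_sub _ (by positivity)).symm
  calc volume (closure S.limitSet ∩ Metric.closedBall x ρ) / volume (Metric.closedBall x ρ)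
      ≤ ENNReal.ofReal (2 * ρ - δ * ρ) / volume (Metric.closedBall x ρ) :=
        ENNReal.div_le_div_right hfinal _
    _ = ENNReal.ofReal (2 * ρ - δ * ρ) / ENNReal.ofReal (2 * ρ) := by
        rw [Real.volume_closedBall]
    _ = ENNReal.ofReal ((2 * ρ - δ * ρ) / (2 * ρ)) :=
        (ENNReal.ofReal_div_of_pos (by linarith)).symm
    _ = ENNReal.ofReal ((2 - δ) / 2) := by
        congr 1
        field_simp
  
end ExpansiveMarkovSystem
/-- The set `H` has Lebesgue measure zero. -/
theorem hypSet_volume_zero {p : ℕ} (S : ExpansiveMarkovSystem p) :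
    MeasureTheory.volume S.hypSet = 0 := by
  by_cases hp2 : 2 ≤ p
  · -- main case: Lebesgue density argument
    set s := closure S.limitSet with hs
    have hsm : MeasurableSet s := isClosed_closure.measurableSet
    have hHs : S.hypSet ⊆ s := fun x hx => subset_closure hx.1
    have hae := Besicovitch.ae_tendsto_measure_inter_div (volume : Measure ℝ) s
    rw [Filter.eventually_iff, mem_ae_iff] at hae
    have hkey : ∀ x ∈ S.hypSet, ¬ Filter.Tendsto
        (fun r => volume (s ∩ Metric.closedBall x r) / volume (Metric.closedBall x r))
        (nhdsWithin 0 (Set.Ioi 0)) (nhds 1) := by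
      intro x hx hT
      obtain ⟨C, hC, r', hr'pos, hr'tend, hr'bound⟩ := S.key_estimate hp2 hx
      have h1 : Filter.Tendsto r' Filter.atTop (nhdsWithin (0:ℝ) (Set.Ioi 0)) :=
        tendsto_nhdsWithin_iff.mpr
          ⟨hr'tend, Filter.Eventually.of_forall fun k => Set.mem_Ioi.mpr (hr'pos k)⟩
      have h2 := hT.comp h1
      have h3 : (1 : ENNReal) ≤ C := le_of_tendsto' h2 fun k => hr'bound k
      exact absurd h3 (not_le.mpr hC)
    have hnull : volume ({x | Filter.Tendsto
        (fun r => volume (s ∩ Metric.closedBall x r) / volume (Metric.closedBall x r))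
        (nhdsWithin 0 (Set.Ioi 0)) (nhds 1)}ᶜ ∩ s) = 0 := by
      rw [← Measure.restrict_apply' hsm]
      exact hae
    apply measure_mono_null _ hnull
    intro x hx
    exact ⟨hkey x hx, hHs hx⟩
  · -- degenerate case p = 1 : the limit set is a single point
    have hp1 : p = 1 := by have := S.hp; omega
    subst hp1
    have hsub : ∀ N : ℕ, S.hypSet ⊆ S.cyl (wordOf (fun _ => (⟨0, S.hp⟩ : Fin 1)) N) := by
      intro N x hx
      obtain ⟨ω, _, hmem⟩ := hx.1
      have hω : ω = fun _ => (⟨0, S.hp⟩ : Fin 1) := funext fun k => Subsingleton.elim _ _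
      rw [← hω]
      exact hmem N
    have hbound : ∀ ε : ℝ, 0 < ε → volume S.hypSet ≤ ENNReal.ofReal ε := by
      intro ε hε
      obtain ⟨N₀, hN₀⟩ := S.hgen ε hε
      set w := wordOf (fun _ => (⟨0, S.hp⟩ : Fin 1)) N₀ with hw
      have hwlen : N₀ ≤ w.length := le_of_eq (wordOf_length _ N₀).symm
      have hbd : Bornology.IsBounded (S.cyl w) := S.I_bounded.subset (S.cyl_sub_I w)
      calc volume S.hypSet ≤ volume (S.cyl w) := measure_mono (hsub N₀)
        _ ≤ EMetric.diam (S.cyl w) := Real.volume_le_diam _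
        _ = ENNReal.ofReal (Metric.diam (S.cyl w)) :=
            (ENNReal.ofReal_toReal hbd.ediam_ne_top).symm
        _ ≤ ENNReal.ofReal ε := ENNReal.ofReal_le_ofReal (hN₀ w hwlen).le
    by_contra h0
    have hfin : volume S.hypSet ≤ ENNReal.ofReal 1 := hbound 1 one_pos
    have hne_top : volume S.hypSet ≠ ⊤ := ne_top_of_le_ne_top ENNReal.ofReal_ne_top hfin
    have htR : 0 < (volume S.hypSet).toReal := ENNReal.toReal_pos h0 hne_top
    have hb := hbound _ (half_pos htR)
    have hlt : ENNReal.ofReal ((volume S.hypSet).toReal / 2) < volume S.hypSet := by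
      conv_rhs => rw [← ENNReal.ofReal_toReal hne_top]
      exact (ENNReal.ofReal_lt_ofReal_iff htR).mpr (by linarith)
    exact absurd hb (not_le.mpr hlt)
end

section
/- Let (Λ_Q, f) be a C^{1+Lip} expansive and transitive Markov system. Let G ⊂ I_i be a gap, let x ∈ Λ_Q be an endpoint of G, and let (i_1 i_2 …) be a sequence admissible for x such that the points g_{i_k…i_1}(x), k ∈ ℕ, are pairwise distinct. Then Σ_{k=1}^∞ diam g_{i_k…i_1}(G) ≤ 2|I|. -/
open Set Metric Filter MeasureTheory
open scoped Classical

namespace GapAux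

variable {p : ℕ} (S : ExpansiveMarkovSystem p)

lemma dom_subset_I : S.dom ⊆ S.I := Set.iUnion_subset S.hsubI

lemma g_image_dom (i : Fin p) : S.g i '' S.dom ⊆ S.dom :=
  (S.hg_range i).trans (interior_subset.trans (Set.subset_iUnion S.Isub i))

lemma gIter_mem_dom (ω : ℕ → Fin p) : ∀ k, ∀ z ∈ S.dom, gIter S.g ω k z ∈ S.dom := by
  intro k
  induction k with
  | zero => intro z hz; exact hz
  | succ k ih =>
      intro z hz
      exact g_image_dom S (ω k) ⟨_, ih z hz, rfl⟩

lemma g_continuousOn (i : Fin p) : ContinuousOn (S.g i) S.dom :=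
  fun x hx => (S.hg_deriv i x hx).continuousWithinAt

lemma gIter_continuousOn (ω : ℕ → Fin p) (k : ℕ) :
    ContinuousOn (gIter S.g ω k) S.dom := by
  induction k with
  | zero => exact continuousOn_id
  | succ k ih =>
      exact (g_continuousOn S (ω k)).comp ih (fun z hz => gIter_mem_dom S ω k z hz)

lemma fIter_gIter (ω : ℕ → Fin p) : ∀ k, ∀ z ∈ S.dom, S.f^[k] (gIter S.g ω k z) = z := by
  intro k
  induction k with
  | zero => intro z _; rfl
  | succ k ih =>
      intro z hz
      have h1 : gIter S.g ω (k + 1) z = S.g (ω k) (gIter S.g ω k z) := rfl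
      rw [h1, Function.iterate_succ_apply, S.hf (ω k) _ (gIter_mem_dom S ω k z hz), ih z hz]

lemma cyl_subset_dom : ∀ w : List (Fin p), w ≠ [] → cylOf S.I S.Isub S.g w ⊆ S.dom
  | [], h => absurd rfl h
  | [i], _ => Set.subset_iUnion S.Isub i
  | i :: j :: t, _ => by
      have h1 : cylOf S.I S.Isub S.g (i :: j :: t) = S.g i '' cylOf S.I S.Isub S.g (j :: t) := rfl
      rw [h1]
      exact (Set.image_mono (cyl_subset_dom (j :: t) (by simp))).trans (g_image_dom S i)

lemma wordOf_succ (ω : ℕ → Fin p) (n : ℕ) :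
    wordOf ω (n + 1) = ω 0 :: wordOf (fun m => ω (m + 1)) n := by
  simp only [wordOf, List.range_succ_eq_map, List.map_cons, List.map_map]
  rfl

lemma wordOf_ne_nil (ω : ℕ → Fin p) (n : ℕ) : wordOf ω (n + 1) ≠ [] := by
  simp [wordOf, List.range_succ]

lemma cyl_cons (i : Fin p) (w : List (Fin p)) (hw : w ≠ []) :
    cylOf S.I S.Isub S.g (i :: w) = S.g i '' cylOf S.I S.Isub S.g w := by
  cases w with
  | nil => exact absurd rfl hw
  | cons j t => rfl

lemma f_limitSet {y : ℝ} (hy : y ∈ S.limitSet) : S.f y ∈ S.limitSet := by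
  obtain ⟨ω', hav, hcyl⟩ := hy
  refine ⟨fun m => ω' (m + 1), ?_, ?_⟩
  · intro w hw n hc
    refine hav w hw (n + 1) (fun k hk => ?_)
    have := hc k hk
    simpa [Nat.add_right_comm] using this
  · have key : ∀ n : ℕ, S.f y ∈ cylOf S.I S.Isub S.g (wordOf (fun m => ω' (m + 1)) (n + 1)) := by
      intro n
      have h2 := hcyl (n + 2)
      rw [wordOf_succ, cyl_cons S _ _ (wordOf_ne_nil _ n)] at h2
      obtain ⟨z, hz, hgz⟩ := h2
      have hzdom : z ∈ S.dom := cyl_subset_dom S _ (wordOf_ne_nil _ n) hz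
      have hfz : S.f y = z := by rw [← hgz]; exact S.hf (ω' 0) z hzdom
      rwa [hfz]
    intro n
    cases n with
    | zero =>
        have h1 := key 0
        have h2 : wordOf (fun m => ω' (m + 1)) 1 = [ω' 1] := by
          simp [wordOf, List.range_succ]
        rw [h2] at h1
        exact dom_subset_I S ((Set.subset_iUnion S.Isub (ω' 1)) h1)
    | succ n => exact key n

lemma fIter_limitSet : ∀ m, ∀ y ∈ S.limitSet, S.f^[m] y ∈ S.limitSet := by
  intro m
  induction m with
  | zero => intro y hy; exact hy
  | succ m ih =>
      intro y hy
      rw [Function.iterate_succ_apply']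
      exact f_limitSet S (ih y hy)

end GapAux

/-- If `G = (a,b) ⊆ I_i` is a gap, `x ∈ Λ_Q` is an endpoint of `G`, and
`(i₁ i₂ …)` is admissible for `x` with the points `g_{i_k…i_1}(x)` pairwise distinct, then
`Σ_{k=1}^∞ diam g_{i_k…i_1}(G) ≤ 2 |I|`. -/
theorem gap_images_summable {p : ℕ} (S : ExpansiveMarkovSystem p) (i : Fin p)
    (a b : ℝ) (hab : a < b)
    (hGi : Set.Ioo a b ⊆ S.Isub i) (hgap : Set.Ioo a b ∩ S.limitSet = ∅)
    (x : ℝ) (hx : x ∈ S.limitSet) (hend : x = a ∨ x = b)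
    (ω : ℕ → Fin p) (hadm : ∀ n : ℕ, 1 ≤ n → gIter S.g ω n x ∈ S.limitSet)
    (hdist : ∀ k l : ℕ, 1 ≤ k → 1 ≤ l → gIter S.g ω k x = gIter S.g ω l x → k = l) :
    ∀ N : ℕ, ∑ k ∈ Finset.range N, Metric.diam (gIter S.g ω (k + 1) '' Set.Ioo a b)
      ≤ 2 * Metric.diam S.I := by
  intro N
  obtain ⟨aI, bI, habI, hIeq⟩ := S.hI
  have hIooDom : Set.Ioo a b ⊆ S.dom := fun z hz => Set.subset_iUnion S.Isub i (hGi hz)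
  have hIsubClosed : IsClosed (S.Isub i) := by
    obtain ⟨a', b', _, h⟩ := S.hIsub i; rw [h]; exact isClosed_Icc
  have hIccIsub : Set.Icc a b ⊆ S.Isub i := by
    rw [← closure_Ioo hab.ne]
    exact hIsubClosed.closure_subset_iff.mpr hGi
  have hIccDom : Set.Icc a b ⊆ S.dom := fun z hz => Set.subset_iUnion S.Isub i (hIccIsub hz)
  have hgap' : ∀ z, z ∈ Set.Ioo a b → z ∉ S.limitSet := fun z hz hzΛ =>
    Set.eq_empty_iff_forall_notMem.mp hgap z ⟨hz, hzΛ⟩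
  set E : ℕ → Set ℝ := fun k => gIter S.g ω (k + 1) '' Set.Ioo a b with hEdef
  have hEdom : ∀ k, E k ⊆ S.dom := by
    rintro k y ⟨z, hz, rfl⟩; exact GapAux.gIter_mem_dom S ω (k + 1) z (hIooDom hz)
  have hEI : ∀ k, E k ⊆ S.I := fun k => (hEdom k).trans (GapAux.dom_subset_I S)
  have hEIcc' : ∀ k, E k ⊆ Set.Icc aI bI := fun k z hz => by
    rw [← hIeq]; exact hEI k hz
  have hEne : ∀ k, (E k).Nonempty := fun k => (Set.nonempty_Ioo.mpr hab).image _
  have hEbddA : ∀ k, BddAbove (E k) := fun k => BddAbove.mono (hEIcc' k) bddAbove_Icc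
  have hEbddB : ∀ k, BddBelow (E k) := fun k => BddBelow.mono (hEIcc' k) bddBelow_Icc
  set c : ℕ → ℝ := fun k => sInf (E k) with hcdef
  set d : ℕ → ℝ := fun k => sSup (E k) with hddef
  have hcd : ∀ k, c k ≤ d k := fun k => csInf_le_csSup (hEne k) (hEbddB k) (hEbddA k)
  have hEsubIcc : ∀ k, E k ⊆ Set.Icc (c k) (d k) := fun k z hz =>
    ⟨csInf_le (hEbddB k) hz, le_csSup (hEbddA k) hz⟩
  have hord : ∀ k, (E k).OrdConnected := fun k =>
    ((isPreconnected_Ioo).image _ ((GapAux.gIter_continuousOn S ω (k + 1)).mono hIooDom)).ordConnected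
  have hUsub : ∀ k, Set.Ioo (c k) (d k) ⊆ E k := by
    intro k y hy
    obtain ⟨u, hu, huy⟩ := (csInf_lt_iff (hEbddB k) (hEne k)).mp hy.1
    obtain ⟨v, hv, hyv⟩ := (lt_csSup_iff (hEbddA k) (hEne k)).mp hy.2
    exact (hord k).out hu hv ⟨huy.le, hyv.le⟩
  have hdiamE : ∀ k, Metric.diam (E k) ≤ d k - c k := fun k =>
    Metric.diam_le_of_forall_dist_le (sub_nonneg.mpr (hcd k))
      (fun u hu v hv => Real.dist_le_of_mem_Icc (hEsubIcc k hu) (hEsubIcc k hv))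
  set xk : ℕ → ℝ := fun k => gIter S.g ω (k + 1) x with hxkdef
  have hxkΛ : ∀ k, xk k ∈ S.limitSet := fun k => hadm (k + 1) (Nat.le_add_left 1 k)
  have hEΛ : ∀ k, ∀ z ∈ E k, z ∉ S.limitSet := by
    rintro k z ⟨w, hw, rfl⟩ hzΛ
    have h1 := GapAux.fIter_limitSet S (k + 1) _ hzΛ
    rw [GapAux.fIter_gIter S ω (k + 1) w (hIooDom hw)] at h1
    exact hgap' w hw h1
  have hxIcc : x ∈ Set.Icc a b := by rcases hend with h | h <;> simp [h, hab.le]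
  have hxk_cl : ∀ k, xk k ∈ closure (E k) := by
    intro k
    have hcont : ContinuousOn (gIter S.g ω (k + 1)) (closure (Set.Ioo a b)) := by
      rw [closure_Ioo hab.ne]
      exact (GapAux.gIter_continuousOn S ω (k + 1)).mono hIccDom
    exact hcont.image_closure ⟨x, by rw [closure_Ioo hab.ne]; exact hxIcc, rfl⟩
  have hxkIcc : ∀ k, xk k ∈ Set.Icc (c k) (d k) := fun k =>
    (closure_minimal (hEsubIcc k) isClosed_Icc) (hxk_cl k)
  have hxk_not : ∀ k l, xk k ∉ Set.Ioo (c l) (d l) := fun k l h =>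
    hEΛ l _ (hUsub l h) (hxkΛ k)
  have hxk_end : ∀ k, xk k = c k ∨ xk k = d k := by
    intro k
    rcases (hxkIcc k).1.eq_or_lt with h | h
    · exact Or.inl h.symm
    rcases (hxkIcc k).2.eq_or_lt with h' | h'
    · exact Or.inr h'
    · exact absurd ⟨h, h'⟩ (hxk_not k k)
  have hinj : ∀ k l : ℕ, k ≠ l → xk k ≠ xk l := fun k l hkl he =>
    hkl (Nat.succ_injective
      (hdist (k + 1) (l + 1) (Nat.le_add_left 1 k) (Nat.le_add_left 1 l) he))
  have hcard : ∀ y : ℝ,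
      ((Finset.range N).filter (fun k => y ∈ Set.Ioo (c k) (d k))).card ≤ 2 := by
    intro y
    by_contra hc
    push_neg at hc
    obtain ⟨k1, k2, k3, hm1, hm2, hm3, h12, h13, h23⟩ := Finset.two_lt_card_iff.mp hc
    have hy1 := (Finset.mem_filter.mp hm1).2
    have hy2 := (Finset.mem_filter.mp hm2).2
    have hy3 := (Finset.mem_filter.mp hm3).2
    have L1 : ∀ k l : ℕ, xk k ≠ xk l → y ∈ Set.Ioo (c k) (d k) → y ∈ Set.Ioo (c l) (d l) →
        xk k < y → xk l < y → False := by
      intro k l hne hyk hyl hk hl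
      have hk' : xk k = c k := by
        rcases hxk_end k with h | h
        · exact h
        · exact absurd (h ▸ hk) (lt_asymm hyk.2)
      have hl' : xk l = c l := by
        rcases hxk_end l with h | h
        · exact h
        · exact absurd (h ▸ hl) (lt_asymm hyl.2)
      rcases hne.lt_or_gt with hlt | hlt
      · exact hxk_not l k ⟨by rw [← hk']; exact hlt, by rw [hl']; exact hyl.1.trans hyk.2⟩
      · exact hxk_not k l ⟨by rw [← hl']; exact hlt, by rw [hk']; exact hyk.1.trans hyl.2⟩
    have L2 : ∀ k l : ℕ, xk k ≠ xk l → y ∈ Set.Ioo (c k) (d k) → y ∈ Set.Ioo (c l) (d l) →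
        y < xk k → y < xk l → False := by
      intro k l hne hyk hyl hk hl
      have hk' : xk k = d k := by
        rcases hxk_end k with h | h
        · exact absurd (h ▸ hk) (lt_asymm hyk.1)
        · exact h
      have hl' : xk l = d l := by
        rcases hxk_end l with h | h
        · exact absurd (h ▸ hl) (lt_asymm hyl.1)
        · exact h
      rcases hne.lt_or_gt with hlt | hlt
      · exact hxk_not k l ⟨hyl.1.trans hk, by rw [← hl']; exact hlt⟩
      · exact hxk_not l k ⟨hyk.1.trans hl, by rw [← hk']; exact hlt⟩
    have hne1 : xk k1 ≠ y := fun h => hxk_not k1 k1 (by rw [h]; exact hy1)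
    have hne2 : xk k2 ≠ y := fun h => hxk_not k2 k2 (by rw [h]; exact hy2)
    have hne3 : xk k3 ≠ y := fun h => hxk_not k3 k3 (by rw [h]; exact hy3)
    rcases lt_or_gt_of_ne hne1 with c1 | c1 <;>
      rcases lt_or_gt_of_ne hne2 with c2 | c2 <;>
        rcases lt_or_gt_of_ne hne3 with c3 | c3
    · exact L1 k1 k2 (hinj _ _ h12) hy1 hy2 c1 c2
    · exact L1 k1 k2 (hinj _ _ h12) hy1 hy2 c1 c2
    · exact L1 k1 k3 (hinj _ _ h13) hy1 hy3 c1 c3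
    · exact L2 k2 k3 (hinj _ _ h23) hy2 hy3 c2 c3
    · exact L1 k2 k3 (hinj _ _ h23) hy2 hy3 c2 c3
    · exact L2 k1 k3 (hinj _ _ h13) hy1 hy3 c1 c3
    · exact L2 k1 k2 (hinj _ _ h12) hy1 hy2 c1 c2
    · exact L2 k1 k2 (hinj _ _ h12) hy1 hy2 c1 c2
  have hImeas : MeasurableSet S.I := by rw [hIeq]; exact measurableSet_Icc
  have hptwise : ∀ y : ℝ,
      ∑ k ∈ Finset.range N, (Set.Ioo (c k) (d k)).indicator (fun _ => (1 : ENNReal)) y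
        ≤ 2 * S.I.indicator (fun _ => (1 : ENNReal)) y := by
    intro y
    have hsum : ∑ k ∈ Finset.range N, (Set.Ioo (c k) (d k)).indicator (fun _ => (1 : ENNReal)) y
        = (((Finset.range N).filter (fun k => y ∈ Set.Ioo (c k) (d k))).card : ENNReal) := by
      rw [Finset.sum_indicator_eq_sum_filter]
      simp
    rw [hsum]
    by_cases hyI : y ∈ S.I
    · rw [Set.indicator_of_mem hyI, mul_one]
      exact_mod_cast hcard y
    · have hflt : (Finset.range N).filter (fun k => y ∈ Set.Ioo (c k) (d k)) = ∅ :=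
        Finset.filter_eq_empty_iff.mpr (fun k _ h => hyI (hEI k (hUsub k h)))
      rw [hflt]
      simp
  have hvol : ∑ k ∈ Finset.range N, volume (Set.Ioo (c k) (d k)) ≤ 2 * volume S.I := by
    have h1 : ∀ k ∈ Finset.range N, volume (Set.Ioo (c k) (d k))
        = ∫⁻ y, (Set.Ioo (c k) (d k)).indicator (fun _ => (1 : ENNReal)) y := by
      intro k _
      rw [lintegral_indicator measurableSet_Ioo, setLIntegral_one]
    rw [Finset.sum_congr rfl h1,
      ← lintegral_finset_sum _ (fun k _ => measurable_const.indicator measurableSet_Ioo)]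
    refine le_trans (lintegral_mono hptwise) (le_of_eq ?_)
    rw [lintegral_const_mul _ (measurable_const.indicator hImeas),
      lintegral_indicator hImeas, setLIntegral_one]
  have hfinal : ENNReal.ofReal (∑ k ∈ Finset.range N, Metric.diam (E k))
      ≤ ENNReal.ofReal (2 * Metric.diam S.I) := by
    rw [ENNReal.ofReal_sum_of_nonneg (fun k _ => Metric.diam_nonneg)]
    refine le_trans (Finset.sum_le_sum (fun k _ => ?_)) (le_trans hvol (le_of_eq ?_))
    · rw [Real.volume_Ioo]
      exact ENNReal.ofReal_le_ofReal (hdiamE k)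
    · rw [hIeq, Real.volume_Icc, Real.diam_Icc habI.le,
        ENNReal.ofReal_mul (by norm_num : (0:ℝ) ≤ 2), ENNReal.ofReal_ofNat]
  exact (ENNReal.ofReal_le_ofReal_iff
    (mul_nonneg (by norm_num) Metric.diam_nonneg)).mp hfinal
end
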